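/- Let H ∈ (1/2, 1) and c₀ > 0. There exist constants C > 0 and c > 0 (depending only on H and c₀) such that for every a ≥ 0, the convergent infinite product satisfies ∏_{j=1}^∞ (1 + c₀ a² j^{-2H})^{-1/4} ≤ C · exp(-c · a^{1/H}). -/

import Mathlib

/-- Exponential-decay bound for the infinite product controlling second-chaos
characteristic functions: for `H ∈ (1/2, 1)` and `c₀ > 0` there are constants
`C, c > 0` such that for every `a ≥ 0`,
`∏_{j=1}^∞ (1 + c₀ a² j^{-2H})^{-1/4} ≤ C exp(-c a^{1/H})`. -/
theorem infinite_product_exp_decay (H c₀ : ℝ) (hH : 1 / 2 < H) (hH1 : H < 1) (hc₀ : 0 < c₀) :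
    ∃ C > 0, ∃ c > 0, ∀ a : ℝ, 0 ≤ a →
      (∏' j : ℕ, (1 + c₀ * a ^ 2 * ((j : ℝ) + 1) ^ (-(2 * H))) ^ (-(1 / 4) : ℝ))
        ≤ C * Real.exp (-c * a ^ (1 / H)) := by
  set c : ℝ := (1 / 4) * Real.log (1 + c₀) with hc
  have hcpos : 0 < c := by
    have : 0 < Real.log (1 + c₀) := Real.log_pos (by linarith)
    positivity
  refine ⟨Real.exp c, Real.exp_pos c, c, hcpos, ?_⟩
  intro a ha
  set x : ℕ → ℝ := fun j => c₀ * a ^ 2 * ((j : ℝ) + 1) ^ (-(2 * H)) with hx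
  have hxnn : ∀ j, 0 ≤ x j := by
    intro j
    have : (0:ℝ) ≤ ((j : ℝ) + 1) ^ (-(2 * H)) := Real.rpow_nonneg (by positivity) _
    positivity
  set g : ℕ → ℝ := fun j => Real.log (1 + x j) * (-(1 / 4)) with hg
  have hgsummable : Summable g := by
    apply Summable.mul_right
    have hbound : ∀ j, ‖Real.log (1 + x j)‖ ≤ c₀ * a ^ 2 * ((j : ℝ) + 1) ^ (-(2 * H)) := by
      intro j
      rw [Real.norm_of_nonneg (Real.log_nonneg (by linarith [hxnn j]))]
      have := Real.log_le_sub_one_of_pos (x := 1 + x j) (by linarith [hxnn j])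
      simpa using this
    apply Summable.of_norm_bounded ?_ hbound
    apply Summable.mul_left
    have : Summable (fun n : ℕ => (n : ℝ) ^ (-(2 * H))) :=
      Real.summable_nat_rpow.2 (by linarith)
    have h1 := (summable_nat_add_iff 1).2 this
    exact h1.congr (fun j => by norm_num)
  have hprod : HasProd (fun j => (1 + x j) ^ (-(1 / 4) : ℝ)) (Real.exp (∑' j, g j)) := by
    have := hgsummable.hasSum.rexp
    convert this using 2 with j
    rw [Function.comp_apply, hg, Real.rpow_def_of_pos (by linarith [hxnn j])]
  rw [hprod.tprod_eq]
  -- lower bound the sum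
  set N : ℕ := ⌊a ^ (1 / H)⌋₊ with hN
  have hterm : ∀ j ∈ Finset.range N, c ≤ (1/4) * Real.log (1 + x j) := by
    intro j hj
    rw [Finset.mem_range] at hj
    have hj1 : ((j : ℝ) + 1) ≤ a ^ (1 / H) := by
      have : (j + 1 : ℕ) ≤ N := hj
      have := Nat.floor_le (by positivity : (0:ℝ) ≤ a ^ (1 / H))
      calc ((j:ℝ) + 1) = ((j + 1 : ℕ) : ℝ) := by push_cast; ring
        _ ≤ (N : ℝ) := by exact_mod_cast hj
        _ ≤ a ^ (1 / H) := this
    have hHpos : 0 < H := by linarith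
    have hpow : ((j : ℝ) + 1) ^ (2 * H) ≤ a ^ 2 := by
      have h1 : ((j : ℝ) + 1) ^ (2 * H) ≤ (a ^ (1 / H)) ^ (2 * H) :=
        Real.rpow_le_rpow (by positivity) hj1 (by positivity)
      have h2 : (a ^ (1 / H)) ^ (2 * H) = a ^ 2 := by
        rw [← Real.rpow_natCast a 2, ← Real.rpow_mul ha]
        congr 1
        push_cast
        field_simp
      rw [h2] at h1
      exact h1
    have hx1 : 1 ≤ a ^ 2 * ((j : ℝ) + 1) ^ (-(2 * H)) := by
      rw [Real.rpow_neg (by positivity), ← div_eq_mul_inv,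
        le_div_iff₀ (by positivity)]
      simpa using hpow
    have : c₀ ≤ x j := by
      rw [hx]
      calc c₀ = c₀ * 1 := by ring
        _ ≤ c₀ * (a ^ 2 * ((j : ℝ) + 1) ^ (-(2 * H))) := by
            exact mul_le_mul_of_nonneg_left hx1 hc₀.le
        _ = c₀ * a ^ 2 * ((j : ℝ) + 1) ^ (-(2 * H)) := by ring
    have hlog : Real.log (1 + c₀) ≤ Real.log (1 + x j) :=
      Real.log_le_log (by linarith) (by linarith)
    rw [hc]; linarith
  have hsum_lb : (N : ℝ) * c ≤ ∑' j, ((1/4) * Real.log (1 + x j)) := by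
    have h1 : ∑ j ∈ Finset.range N, c ≤ ∑ j ∈ Finset.range N, (1/4) * Real.log (1 + x j) :=
      Finset.sum_le_sum hterm
    have h2 : Summable (fun j => (1/4) * Real.log (1 + x j)) := by
      have := hgsummable.mul_right (-1)
      refine this.congr (fun j => ?_)
      simp only [hg]; ring
    have h3 : ∑ j ∈ Finset.range N, (1/4) * Real.log (1 + x j)
        ≤ ∑' j, (1/4) * Real.log (1 + x j) := by
      refine Summable.sum_le_tsum _ (fun j _ => ?_) h2
      have := Real.log_nonneg (by linarith [hxnn j] : (1:ℝ) ≤ 1 + x j)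
      linarith
    simp only [Finset.sum_const, Finset.card_range, nsmul_eq_mul] at h1
    linarith
  have htsum : ∑' j, g j = -(∑' j, ((1/4) * Real.log (1 + x j))) := by
    rw [← tsum_neg]
    congr 1 with j
    rw [hg]; ring
  rw [htsum]
  have hNlb : a ^ (1 / H) - 1 ≤ (N : ℝ) := by
    have := Nat.lt_floor_add_one (a ^ (1 / H))
    linarith
  calc Real.exp (-(∑' j, ((1/4) * Real.log (1 + x j))))
      ≤ Real.exp (-((N : ℝ) * c)) := by
        apply Real.exp_le_exp.2; linarith
    _ ≤ Real.exp (-((a ^ (1 / H) - 1) * c)) := by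
        apply Real.exp_le_exp.2
        have := mul_le_mul_of_nonneg_right hNlb hcpos.le
        linarith
    _ = Real.exp c * Real.exp (-c * a ^ (1 / H)) := by
        rw [← Real.exp_add]; ring_nf
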